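/- For every θ > 0, h > 0 and ω ∈ ℝ, the series ∑_{k ∈ ℤ} θ/((ω + k/h)² + θ²) converges and equals π h · coth(π θ h) / (1 + sin²(π h ω) · (coth²(π θ h) − 1)). -/

import Mathlib

open Real

namespace PeriodizedMatern
open Complex MeasureTheory intervalIntegral

lemma conj_prod (a b : ℝ) : ((a:ℂ) + b*I) * ((a:ℂ) - b*I) = ((a^2+b^2 : ℝ) : ℂ) := by
  push_cast; ring_nf; rw [Complex.I_sq]; ring

lemma cauchy_pair (a b : ℝ) (ha : a ≠ 0) :
    (1:ℂ)/((a:ℂ) + b*I) + 1/((a:ℂ) - b*I) = ((2*a/(a^2+b^2) : ℝ) : ℂ) := by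
  have h1 : (a:ℂ) + b*I ≠ 0 := fun h => ha (by simpa using congrArg Complex.re h)
  have h2 : (a:ℂ) - b*I ≠ 0 := fun h => ha (by simpa using congrArg Complex.re h)
  rw [div_add_div _ _ h1 h2, conj_prod]
  push_cast; ring

section key
variable (x y : ℝ)

noncomputable def pc : ℂ := (2*π*y : ℝ) + (2*π*x : ℝ)*I
noncomputable def qc : ℂ := -(2*π*y : ℝ) + (2*π*x : ℝ)*I
noncomputable def gc : ℝ → ℂ := fun u =>
  (2*π : ℝ)/(Complex.exp (pc x y) - 1) * Complex.exp (pc x y * u)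
  - (2*π : ℝ)/(Complex.exp (qc x y) - 1) * Complex.exp (qc x y * u)

variable (hy : 0 < y)
include hy

lemma hEp : Complex.exp (pc x y) - 1 ≠ 0 := by
  rw [sub_ne_zero]
  intro hcon
  have h2 := congrArg (norm : ℂ → ℝ) hcon
  rw [Complex.norm_exp] at h2
  simp only [pc, Complex.add_re, Complex.ofReal_re, Complex.mul_re, Complex.I_re,
    Complex.ofReal_im, Complex.I_im, map_one, norm_one] at h2
  rw [show 2 * π * y + (2 * π * x * 0 - 0 * 1) = 2*π*y by ring, Real.exp_eq_one_iff] at h2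
  have hπ := Real.pi_pos
  nlinarith

lemma hEq : Complex.exp (qc x y) - 1 ≠ 0 := by
  rw [sub_ne_zero]
  intro hcon
  have h2 := congrArg (norm : ℂ → ℝ) hcon
  rw [Complex.norm_exp] at h2
  simp only [qc, Complex.add_re, Complex.neg_re, Complex.ofReal_re, Complex.mul_re, Complex.I_re,
    Complex.ofReal_im, Complex.I_im, map_one, norm_one] at h2
  rw [show -(2 * π * y) + (2 * π * x * 0 - 0 * 1) = -(2*π*y) by ring, Real.exp_eq_one_iff] at h2
  have hπ := Real.pi_pos
  nlinarith

lemma coeff_eq (n : ℤ) (hab : (0:ℝ) < 0+1) :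
    fourierCoeffOn hab (gc x y) n = ((2*y/(y^2+(x-(n:ℝ))^2) : ℝ) : ℂ) := by
  have hπ := Real.pi_pos
  set d : ℂ := 2*(π:ℂ)*n*I with hd
  set p := pc x y
  set q := qc x y
  have hdre : d.re = 0 := by simp [hd]
  have hpd : p - d ≠ 0 := by
    intro hcon
    have := congrArg Complex.re hcon
    simp only [Complex.sub_re, hdre, Complex.zero_re, sub_zero, p, pc, Complex.add_re,
      Complex.ofReal_re, Complex.mul_re, Complex.I_re, Complex.ofReal_im, Complex.I_im] at this
    nlinarith
  have hqd : q - d ≠ 0 := by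
    intro hcon
    have := congrArg Complex.re hcon
    simp only [Complex.sub_re, hdre, Complex.zero_re, sub_zero, q, qc, Complex.add_re,
      Complex.neg_re, Complex.ofReal_re, Complex.mul_re, Complex.I_re, Complex.ofReal_im,
      Complex.I_im] at this
    nlinarith
  set c₁ : ℂ := (2*π : ℝ)/(Complex.exp p - 1) with hc₁
  set c₂ : ℂ := (2*π : ℝ)/(Complex.exp q - 1) with hc₂
  rw [fourierCoeffOn_eq_integral]
  have hinteg : ∀ u : ℝ, (fourier (-n) (u : AddCircle ((0:ℝ)+1-0))) • gc x y u
      = c₁ * Complex.exp ((p - d)*u) - c₂ * Complex.exp ((q - d)*u) := by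
    intro u
    rw [fourier_coe_apply]
    simp only [gc, smul_eq_mul]
    rw [mul_sub]
    congr 1
    · rw [mul_comm, mul_assoc, ← Complex.exp_add]
      congr 1
      push_cast [hd]
      simp only [p]
      ring_nf
    · rw [mul_comm, mul_assoc, ← Complex.exp_add]
      congr 1
      push_cast [hd]
      simp only [q]
      ring_nf
  rw [intervalIntegral.integral_congr (g := fun u : ℝ =>
    c₁ * Complex.exp ((p - d)*u) - c₂ * Complex.exp ((q - d)*u)) (fun u _ => hinteg u)]
  rw [intervalIntegral.integral_sub
    (Continuous.intervalIntegrable (by fun_prop : Continuous (fun u : ℝ => c₁ * Complex.exp ((p - d)*(u:ℂ)))) _ _)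
    (Continuous.intervalIntegrable (by fun_prop : Continuous (fun u : ℝ => c₂ * Complex.exp ((q - d)*(u:ℂ)))) _ _),
    intervalIntegral.integral_const_mul, intervalIntegral.integral_const_mul,
    integral_exp_mul_complex hpd, integral_exp_mul_complex hqd]
  have hexp_d : Complex.exp d = 1 := by
    rw [show d = (n:ℂ) * (2*(π:ℂ)*I) by rw [hd]; ring]
    exact Complex.exp_int_mul_two_pi_mul_I n
  have he1 : Complex.exp ((p - d) * ((0:ℝ)+1:ℝ)) = Complex.exp p := by
    norm_num [Complex.exp_sub, hexp_d]
  have he2 : Complex.exp ((q - d) * ((0:ℝ)+1:ℝ)) = Complex.exp q := by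
    norm_num [Complex.exp_sub, hexp_d]
  have he3 : Complex.exp ((p - d) * ((0:ℝ):ℂ)) = 1 := by norm_num
  have he4 : Complex.exp ((q - d) * ((0:ℝ):ℂ)) = 1 := by norm_num
  rw [he1, he2, he3, he4]
  have hEp' := hEp x y hy
  have hEq' := hEq x y hy
  have hsimp1 : c₁ * ((Complex.exp p - 1)/(p - d)) = (2*π:ℝ)/(p-d) := by
    rw [hc₁]; field_simp; exact div_self hEp'
  have hsimp2 : c₂ * ((Complex.exp q - 1)/(q - d)) = (2*π:ℝ)/(q-d) := by
    rw [hc₂]; field_simp; exact div_self hEq'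
  rw [hsimp1, hsimp2]
  have hpd2 : p - d = ((2*π*y : ℝ):ℂ) + ((2*π*(x - n) : ℝ):ℂ)*I := by
    rw [hd]; simp only [p, pc]; push_cast; ring
  have hqd2 : q - d = -(((2*π*y : ℝ):ℂ) - ((2*π*(x - n) : ℝ):ℂ)*I) := by
    rw [hd]; simp only [q, qc]; push_cast; ring
  rw [hpd2, hqd2]
  rw [div_neg, sub_neg_eq_add, show ((2*π:ℝ):ℂ)/(((2*π*y : ℝ):ℂ) + ((2*π*(x - n) : ℝ):ℂ)*I)
      = (2*π:ℝ) * ((1:ℂ)/(((2*π*y : ℝ):ℂ) + ((2*π*(x - n) : ℝ):ℂ)*I)) by rw [mul_one_div],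
    show ((2*π:ℝ):ℂ)/(((2*π*y : ℝ):ℂ) - ((2*π*(x - n) : ℝ):ℂ)*I)
      = (2*π:ℝ) * ((1:ℂ)/(((2*π*y : ℝ):ℂ) - ((2*π*(x - n) : ℝ):ℂ)*I)) by rw [mul_one_div],
    ← mul_add, cauchy_pair (2*π*y) (2*π*(x-n)) (by positivity)]
  have h10 : (1:ℝ)/(0+1-0) = 1 := by norm_num
  rw [h10, one_smul]
  rw [← Complex.ofReal_mul]
  congr 1
  have hden : (0:ℝ) < (2*π*y)^2 + (2*π*(x - (n:ℝ)))^2 := by positivity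
  have hden2 : (0:ℝ) < y^2 + (x - (n:ℝ))^2 := by positivity
  field_simp

lemma gc_periodic : gc x y 0 = gc x y 1 := by
  have h1 := hEp x y hy
  have h2 := hEq x y hy
  simp only [gc, Complex.ofReal_zero, Complex.ofReal_one, mul_zero, mul_one, Complex.exp_zero]
  field_simp
  ring

omit hy in
lemma gc_cont : Continuous (gc x y) := by
  apply Continuous.sub <;> exact continuous_const.mul
    (Complex.continuous_exp.comp (continuous_const.mul Complex.continuous_ofReal))

lemma cosh_sub_cos_pos : 0 < Real.cosh (2*π*y) - Real.cos (2*π*x) := by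
  have h1 : (1:ℝ) < Real.cosh (2*π*y) := by
    rw [Real.one_lt_cosh]
    have := Real.pi_pos; positivity
  have h2 := Real.cos_le_one (2*π*x)
  linarith

lemma gc_zero : gc x y 0 =
    ((2*π*Real.sinh (2*π*y)/(Real.cosh (2*π*y) - Real.cos (2*π*x)) : ℝ) : ℂ) := by
  have h1 := hEp x y hy
  have h2 := hEq x y hy
  simp only [gc, Complex.ofReal_zero, mul_zero, Complex.exp_zero, mul_one]
  set U : ℂ := Complex.exp ((2*π*y:ℝ):ℂ) with hU
  set V : ℂ := Complex.exp (((2*π*x:ℝ):ℂ)*I) with hV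
  have hU0 : U ≠ 0 := Complex.exp_ne_zero _
  have hV0 : V ≠ 0 := Complex.exp_ne_zero _
  have hpcUV : Complex.exp (pc x y) = U*V := by
    rw [show pc x y = ((2*π*y:ℝ):ℂ) + ((2*π*x:ℝ):ℂ)*I from rfl, Complex.exp_add]
  have hqcUV : Complex.exp (qc x y) = U⁻¹*V := by
    rw [show qc x y = -((2*π*y:ℝ):ℂ) + ((2*π*x:ℝ):ℂ)*I from rfl, Complex.exp_add,
      Complex.exp_neg]
  have hsinh : ((Real.sinh (2*π*y) : ℝ):ℂ) = (U - U⁻¹)/2 := by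
    rw [Real.sinh_eq, Complex.ofReal_div, Complex.ofReal_sub, Complex.ofReal_exp,
      Complex.ofReal_exp, Complex.ofReal_neg, Complex.exp_neg, hU]
    norm_num
  have hcosh : ((Real.cosh (2*π*y) : ℝ):ℂ) = (U + U⁻¹)/2 := by
    rw [Real.cosh_eq, Complex.ofReal_div, Complex.ofReal_add, Complex.ofReal_exp,
      Complex.ofReal_exp, Complex.ofReal_neg, Complex.exp_neg, hU]
    norm_num
  have hcos : ((Real.cos (2*π*x) : ℝ):ℂ) = (V + V⁻¹)/2 := by
    rw [hV, ← Complex.exp_neg, ← neg_mul,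
      show (-((2*π*x:ℝ):ℂ)) * I = ((-(2*π*x):ℝ):ℂ)*I by push_cast; ring,
      Complex.exp_mul_I, Complex.exp_mul_I, ← Complex.ofReal_cos, ← Complex.ofReal_sin,
      ← Complex.ofReal_cos, ← Complex.ofReal_sin, Real.cos_neg, Real.sin_neg]
    push_cast
    ring
  have hdne : ((Real.cosh (2*π*y) - Real.cos (2*π*x) : ℝ):ℂ) ≠ 0 :=
    Complex.ofReal_ne_zero.mpr (ne_of_gt (cosh_sub_cos_pos x y hy))
  rw [Complex.ofReal_sub, hcosh, hcos] at hdne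
  rw [hpcUV] at h1 ⊢
  rw [hqcUV] at h2 ⊢
  have hrhs : ((2*π*Real.sinh (2*π*y)/(Real.cosh (2*π*y) - Real.cos (2*π*x)) : ℝ):ℂ)
      = ((2*π:ℝ):ℂ) * ((U - U⁻¹)/2) / ((U + U⁻¹)/2 - (V + V⁻¹)/2) := by
    rw [Complex.ofReal_div, Complex.ofReal_mul, Complex.ofReal_sub, hsinh, hcosh, hcos]
  rw [hrhs]
  have h2' : V - U ≠ 0 := by
    intro hc
    apply h2
    rw [show U⁻¹ * V - 1 = U⁻¹ * (V - U) by field_simp, hc, mul_zero]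
  rw [div_sub_div _ _ h1 h2, div_eq_div_iff (mul_ne_zero h1 h2) hdne]
  field_simp
  ring

omit hy in
lemma summable_r : Summable (fun n : ℤ => 2*y/(y^2+(x-(n:ℝ))^2)) := by
  apply Summable.of_norm_bounded_eventually (g := fun n : ℤ => 2*|y| * (1/|(n:ℝ) + (-x)| ^ (2:ℝ)))
    (((summable_one_div_int_add_rpow (-x) 2).mpr one_lt_two).mul_left _)
  rw [Filter.eventually_cofinite]
  apply Set.Finite.subset (Set.finite_Icc (⌈x⌉ - 1) (⌊x⌋ + 1))
  intro n hn
  simp only [Set.mem_setOf_eq, not_le] at hn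
  by_contra hmem
  refine absurd hn (not_lt.mpr ?_); clear hn
  have h1 : (1:ℝ) ≤ |(n:ℝ) + (-x)| := by
    rw [Set.mem_Icc, not_and_or, not_le, not_le] at hmem
    rcases hmem with hl | hr
    · have h2 : n ≤ ⌈x⌉ - 2 := by omega
      have h3 : ((⌈x⌉:ℝ) - 2) ≤ x - 1 := by
        have := Int.ceil_lt_add_one (R := ℝ) x
        linarith
      have h4 : (n:ℝ) ≤ x - 1 := le_trans (by exact_mod_cast h2) h3
      rw [le_abs]
      right; linarith
    · have h2 : ⌊x⌋ + 2 ≤ n := by omega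
      have h3 : x + 1 ≤ ((⌊x⌋:ℝ) + 2) := by
        have := Int.sub_one_lt_floor x
        linarith
      have h4 : x + 1 ≤ (n:ℝ) := le_trans h3 (by exact_mod_cast h2)
      rw [le_abs]
      left; linarith
  have hpos : (0:ℝ) < ((n:ℝ) + (-x))^2 := by
    have h0 : |(n:ℝ) + (-x)| > 0 := by linarith
    have := _root_.sq_abs ((n:ℝ) + (-x))
    nlinarith
  have hrpow : |(n:ℝ) + (-x)| ^ (2:ℝ) = ((n:ℝ) + (-x))^2 := by
    rw [show (2:ℝ) = ((2:ℕ):ℝ) by norm_num, Real.rpow_natCast, _root_.sq_abs]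
  rw [hrpow, mul_one_div]
  have hsq : ((n:ℝ) + -x)^2 = (x - (n:ℝ))^2 := by ring
  rw [hsq]
  have hden : (0:ℝ) < y^2 + (x-(n:ℝ))^2 := by rw [← hsq]; positivity
  calc ‖2*y/(y^2+(x-(n:ℝ))^2)‖ = 2*|y|/(y^2+(x-(n:ℝ))^2) := by
        rw [Real.norm_eq_abs, abs_div, abs_of_pos hden, abs_mul, _root_.abs_two]
    _ ≤ 2*|y|/((x - (n:ℝ))^2) := by
        apply div_le_div_of_nonneg_left (by positivity) (by rw [← hsq]; positivity)
        nlinarith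

lemma key : HasSum (fun n : ℤ => 2*y/(y^2+(x-(n:ℝ))^2))
    (2*π*Real.sinh (2*π*y)/(Real.cosh (2*π*y) - Real.cos (2*π*x))) := by
  haveI : Fact ((0:ℝ) < 1) := ⟨one_pos⟩
  set f : C(AddCircle (1:ℝ), ℂ) := ⟨AddCircle.liftIco 1 0 (gc x y),
    AddCircle.liftIco_zero_continuous (gc_periodic x y hy) ((gc_cont x y).continuousOn)⟩ with hf
  have hcoeff : ∀ n : ℤ, fourierCoeff (⇑f) n = ((2*y/(y^2+(x-(n:ℝ))^2) : ℝ) : ℂ) := by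
    intro n
    show fourierCoeff (AddCircle.liftIco 1 0 (gc x y)) n = _
    rw [fourierCoeff_liftIco_eq, coeff_eq x y hy n]
  have hsummable : Summable (fourierCoeff ⇑f) := by
    apply Summable.congr (f := fun n : ℤ => ((2*y/(y^2+(x-(n:ℝ))^2) : ℝ) : ℂ))
      _ (fun n => (hcoeff n).symm)
    exact (Complex.ofRealCLM : ℝ →L[ℝ] ℂ).summable (summable_r x y)
  have H := has_pointwise_sum_fourier_series_of_summable hsummable (((0:ℝ) : AddCircle (1:ℝ)))
  have hf0 : f (((0:ℝ) : AddCircle (1:ℝ))) = gc x y 0 := by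
    show AddCircle.liftIco 1 0 (gc x y) _ = _
    exact AddCircle.liftIco_zero_coe_apply (Set.mem_Ico.mpr ⟨le_refl 0, one_pos⟩)
  have hfour : ∀ i : ℤ, (fourier i) (((0:ℝ) : AddCircle (1:ℝ))) = 1 := fun i => by
    rw [fourier_coe_apply]
    norm_num
  simp only [hcoeff, hfour, smul_eq_mul, mul_one] at H
  rw [hf0, gc_zero x y hy] at H
  have H2 := (Complex.reCLM : ℂ →L[ℝ] ℝ).hasSum H
  simpa only [Complex.reCLM_apply, Complex.ofReal_re] using H2

end key

end PeriodizedMatern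

/-- The real hyperbolic cotangent. -/
noncomputable def coth (x : ℝ) : ℝ := Real.cosh x / Real.sinh x

/-- For every `θ > 0`, `h > 0` and `ω ∈ ℝ`, the series `∑_{k ∈ ℤ} θ/((ω + k/h)² + θ²)`
converges and equals `π h coth(π θ h) / (1 + sin²(π h ω) (coth²(π θ h) − 1))`. -/
theorem periodized_matern_half_spectral_density (θ h ω : ℝ) (hθ : 0 < θ) (hh : 0 < h) :
    HasSum (fun k : ℤ => θ / ((ω + (k : ℝ) / h) ^ 2 + θ ^ 2))
      (π * h * coth (π * θ * h) /
        (1 + Real.sin (π * h * ω) ^ 2 * (coth (π * θ * h) ^ 2 - 1))) := by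
  have hπ := Real.pi_pos
  have hy : 0 < θ * h := mul_pos hθ hh
  have K := PeriodizedMatern.key (h*ω) (θ*h) hy
  have K2 := ((Equiv.neg ℤ).hasSum_iff).mpr K
  simp only [Function.comp_def, Equiv.neg_apply, Int.cast_neg, sub_neg_eq_add] at K2
  have K3 := K2.mul_left (h/2)
  have hfun : (fun n : ℤ => (h/2) * (2*(θ*h)/((θ*h)^2 + (h*ω + (n:ℝ))^2)))
      = fun k : ℤ => θ / ((ω + (k : ℝ)/h)^2 + θ^2) := by
    funext n
    have hd1 : (0:ℝ) < (ω + (n:ℝ)/h)^2 + θ^2 := by positivity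
    have hd2 : (0:ℝ) < (θ*h)^2 + (h*ω + (n:ℝ))^2 := by positivity
    field_simp
    ring
  rw [hfun] at K3
  have hval : h/2 * (2*π*Real.sinh (2*π*(θ*h))/(Real.cosh (2*π*(θ*h)) - Real.cos (2*π*(h*ω))))
      = π * h * coth (π*θ*h) / (1 + Real.sin (π*h*ω)^2 * (coth (π*θ*h)^2 - 1)) := by
    set a := π*θ*h with ha
    set b := π*h*ω with hb
    have h2a : 2*π*(θ*h) = 2*a := by rw [ha]; ring
    have h2b : 2*π*(h*ω) = 2*b := by rw [hb]; ring
    rw [h2a, h2b, Real.cosh_two_mul, Real.sinh_two_mul, Real.cos_two_mul]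
    have hS : 0 < Real.sinh a := by
      rw [Real.sinh_pos_iff, ha]; positivity
    have hSne : Real.sinh a ≠ 0 := ne_of_gt hS
    have hC2 : Real.cosh a ^ 2 = Real.sinh a ^ 2 + 1 := Real.cosh_sq a
    have hcos2 : Real.cos b ^ 2 = 1 - Real.sin b ^ 2 := by
      have := Real.sin_sq_add_cos_sq b; linarith
    have hcoth : coth a = Real.cosh a / Real.sinh a := rfl
    rw [hcoth]
    have hden : Real.cosh a ^2 + Real.sinh a ^2 - (2*Real.cos b ^2 - 1)
        = 2*(Real.sinh a^2 + Real.sin b^2) := by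
      rw [hC2, hcos2]; ring
    have hcoth2 : (Real.cosh a / Real.sinh a)^2 - 1 = 1/Real.sinh a^2 := by
      rw [div_pow, hC2]
      field_simp
      ring
    rw [hcoth2]
    have hdpos : (0:ℝ) < Real.sinh a^2 + Real.sin b^2 := by positivity
    have hrden : 1 + Real.sin b ^2 * (1/Real.sinh a^2)
        = (Real.sinh a^2 + Real.sin b^2)/Real.sinh a^2 := by
      field_simp
    rw [hrden, hden]
    field_simp
  rw [← hval]
  exact K3
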